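/- Let n ≥ 2 be an integer, let p ∈ [1, 2), let s ≥ 0 and c ∈ [−1, 1]. Let r : (0, ∞) → (0, ∞) be a function with lim_{t→∞} r(t)/t = (2/p − 1)·(n − 1). For t > 0 set X(t) = cosh(r(t))·cosh(s) − c·sinh(r(t))·sinh(s) and d(t) = log(X(t) + √(X(t)² − 1)). Then lim_{t→∞} exp( −((n−1)/2)·(d(t) − r(t)) − (d(t)² − r(t)²)/(4t) ) = (cosh(s) − c·sinh(s))^{−(n−1)/p}. -/

import Mathlib

open Filter Real

/-- The hyperbolic distance between two points of real hyperbolic space at distances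
`r` and `s` from a base point, whose connecting directions make angle `arccos c`:
`arcosh (cosh r cosh s − c sinh r sinh s)`. -/
noncomputable def hypDist (s c r : ℝ) : ℝ :=
  Real.log ((Real.cosh r * Real.cosh s - c * Real.sinh r * Real.sinh s) +
    Real.sqrt ((Real.cosh r * Real.cosh s - c * Real.sinh r * Real.sinh s) ^ 2 - 1))

lemma A_pos (s c : ℝ) (hs : 0 ≤ s) (hc : c ∈ Set.Icc (-1:ℝ) 1) :
    0 < Real.cosh s - c * Real.sinh s := by
  have h1 : 0 ≤ Real.sinh s := Real.sinh_nonneg_iff.2 hs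
  have h2 : c * Real.sinh s ≤ Real.sinh s := by nlinarith [hc.2]
  have h3 : Real.cosh s - Real.sinh s = Real.exp (-s) := Real.cosh_sub_sinh s
  nlinarith [Real.exp_pos (-s)]

lemma X_ge_one (s c x : ℝ) (hs : 0 ≤ s) (hx : 0 ≤ x) (hc : c ∈ Set.Icc (-1:ℝ) 1) :
    1 ≤ Real.cosh x * Real.cosh s - c * Real.sinh x * Real.sinh s := by
  have h1 : Real.cosh (x - s) = Real.cosh x * Real.cosh s - Real.sinh x * Real.sinh s :=
    Real.cosh_sub x s
  have h2 : 1 ≤ Real.cosh (x - s) := Real.one_le_cosh _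
  have h3 : 0 ≤ Real.sinh x := Real.sinh_nonneg_iff.2 hx
  have h5 : 0 ≤ (1 - c) * (Real.sinh x * Real.sinh s) :=
    mul_nonneg (by linarith [hc.2]) (mul_nonneg h3 (Real.sinh_nonneg_iff.2 hs))
  nlinarith

lemma hypDist_sub_tendsto (s c : ℝ) (hs : 0 ≤ s) (hc : c ∈ Set.Icc (-1:ℝ) 1) :
    Tendsto (fun x : ℝ => hypDist s c x - x) atTop
      (nhds (Real.log (Real.cosh s - c * Real.sinh s))) := by
  set A := Real.cosh s - c * Real.sinh s with hA
  set B := Real.cosh s + c * Real.sinh s with hB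
  have hApos : 0 < A := A_pos s c hs hc
  have hgc : ContinuousAt
      (fun u : ℝ => A/2 + u^2*B/2 + Real.sqrt ((A/2 + u^2*B/2)^2 - u^2)) 0 := by
    fun_prop
  have hgt : Tendsto (fun u : ℝ => A/2 + u^2*B/2 + Real.sqrt ((A/2 + u^2*B/2)^2 - u^2))
      (nhds 0) (nhds A) := by
    have h := hgc.tendsto
    have hval : A/2 + (0:ℝ)^2*B/2 + Real.sqrt ((A/2 + (0:ℝ)^2*B/2)^2 - (0:ℝ)^2) = A := by
      norm_num
      rw [Real.sqrt_sq (by linarith)]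
      ring
    rwa [hval] at h
  have hg : Tendsto (fun u : ℝ =>
      Real.log (A/2 + u^2*B/2 + Real.sqrt ((A/2 + u^2*B/2)^2 - u^2))) (nhds 0)
      (nhds (Real.log A)) :=
    (Real.continuousAt_log hApos.ne').tendsto.comp hgt
  have hexp : Tendsto (fun x : ℝ => Real.exp (-x)) atTop (nhds 0) :=
    Real.tendsto_exp_neg_atTop_nhds_zero
  refine (hg.comp hexp).congr' ?_
  filter_upwards [eventually_ge_atTop (0:ℝ)] with x hx
  set u := Real.exp (-x) with hu
  set X := Real.cosh x * Real.cosh s - c * Real.sinh x * Real.sinh s with hX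
  have hupos : 0 < u := Real.exp_pos _
  have hX1 : 1 ≤ X := X_ge_one s c x hs hx hc
  have hXsq : 0 ≤ X^2 - 1 := by nlinarith
  have claim1 : A/2 + u^2*B/2 = X * u := by
    have hx1 : Real.cosh x = (Real.exp x + Real.exp (-x)) / 2 := Real.cosh_eq x
    have hx2 : Real.sinh x = (Real.exp x - Real.exp (-x)) / 2 := Real.sinh_eq x
    have hmul : Real.exp x * u = 1 := by
      rw [hu, ← Real.exp_add]; simp
    rw [hX, hA, hB, hx1, hx2]
    nlinarith [hmul]
  have claim2 : Real.sqrt ((X*u)^2 - u^2) = Real.sqrt (X^2 - 1) * u := by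
    have h : (X*u)^2 - u^2 = (X^2 - 1) * u^2 := by ring
    rw [h, Real.sqrt_mul hXsq, Real.sqrt_sq hupos.le]
  have hpos : 0 < X + Real.sqrt (X^2 - 1) := by
    have := Real.sqrt_nonneg (X^2 - 1)
    linarith
  show Real.log (A/2 + u^2*B/2 + Real.sqrt ((A/2 + u^2*B/2)^2 - u^2)) = hypDist s c x - x
  rw [claim1, claim2, hypDist]
  rw [show X * u + Real.sqrt (X^2-1) * u = (X + Real.sqrt (X^2-1)) * u by ring,
    Real.log_mul hpos.ne' hupos.ne', hu, Real.log_exp]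
  ring

/-- Let `n ≥ 2`, `p ∈ [1,2)`, `s ≥ 0`, `c ∈ [-1,1]`, and `r : (0,∞) → (0,∞)` with
`r(t)/t → (2/p − 1)(n − 1)` as `t → ∞`. With `d(t)` the hyperbolic distance determined
by `r(t)`, `s` and `c`, one has
`exp(−((n−1)/2)(d(t) − r(t)) − (d(t)² − r(t)²)/(4t)) → (cosh s − c sinh s)^{−(n−1)/p}`
as `t → ∞`. -/
theorem heat_quotient_asymptotics_hyperbolic (n : ℕ) (hn : 2 ≤ n)
    (p : ℝ) (hp : p ∈ Set.Ico (1 : ℝ) 2) (s c : ℝ) (hs : 0 ≤ s)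
    (hc : c ∈ Set.Icc (-1 : ℝ) 1)
    (r : ℝ → ℝ) (hr : ∀ t > (0 : ℝ), 0 < r t)
    (hlim : Tendsto (fun t : ℝ => r t / t) atTop (nhds ((2 / p - 1) * ((n : ℝ) - 1)))) :
    Tendsto
      (fun t : ℝ =>
        Real.exp (-(((n : ℝ) - 1) / 2) * (hypDist s c (r t) - r t) -
          ((hypDist s c (r t)) ^ 2 - (r t) ^ 2) / (4 * t)))
      atTop
      (nhds ((Real.cosh s - c * Real.sinh s) ^ (-((n : ℝ) - 1) / p))) := by
  have hp1 : (1:ℝ) ≤ p := hp.1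
  have hp2 : p < 2 := hp.2
  have hp0 : (0:ℝ) < p := by linarith
  set α : ℝ := (2 / p - 1) * ((n : ℝ) - 1) with hαdef
  have hn1 : (1:ℝ) ≤ (n:ℝ) - 1 := by
    have : (2:ℝ) ≤ (n:ℝ) := by exact_mod_cast hn
    linarith
  have hα : 0 < α := by
    have h21 : (1:ℝ) < 2 / p := (one_lt_div hp0).2 hp2
    have : 0 < 2 / p - 1 := by linarith
    exact mul_pos this (by linarith)
  set A : ℝ := Real.cosh s - c * Real.sinh s with hA
  have hApos : 0 < A := A_pos s c hs hc
  set L : ℝ := Real.log A with hL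
  -- r tends to infinity
  have h1 : ∀ᶠ t in atTop, α / 2 < r t / t :=
    hlim.eventually (eventually_gt_nhds (by linarith))
  have hrtop : Tendsto r atTop atTop := by
    refine tendsto_atTop_mono' _ ?_ (Tendsto.const_mul_atTop (half_pos hα) tendsto_id)
    filter_upwards [h1, eventually_gt_atTop (0:ℝ)] with t h ht
    exact le_of_lt ((lt_div_iff₀ ht).1 h)
  have hd_sub : Tendsto (fun t => hypDist s c (r t) - r t) atTop (nhds L) :=
    (hypDist_sub_tendsto s c hs hc).comp hrtop
  have hzero : Tendsto (fun t => (hypDist s c (r t) - r t) / t) atTop (nhds 0) :=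
    hd_sub.div_atTop tendsto_id
  have hdt : Tendsto (fun t => hypDist s c (r t) / t) atTop (nhds α) := by
    have h := hzero.add hlim
    rw [zero_add] at h
    refine h.congr fun t => ?_
    rw [← add_div, sub_add_cancel]
  have hsum : Tendsto (fun t => hypDist s c (r t) / t + r t / t) atTop (nhds (α + α)) :=
    hdt.add hlim
  have hE : Tendsto
      (fun t : ℝ => -(((n : ℝ) - 1) / 2) * (hypDist s c (r t) - r t) -
        ((hypDist s c (r t)) ^ 2 - (r t) ^ 2) / (4 * t)) atTop
      (nhds (-(((n : ℝ) - 1) / 2) * L - L * (α + α) / 4)) := by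
    have h := ((tendsto_const_nhds (x := -(((n : ℝ) - 1) / 2))).mul hd_sub).sub
      ((hd_sub.mul hsum).div_const 4)
    refine h.congr' ?_
    filter_upwards [eventually_gt_atTop (0:ℝ)] with t ht
    have ht' : t ≠ 0 := ht.ne'
    field_simp
    ring
  have hfinal := (Real.continuous_exp.tendsto _).comp hE
  convert hfinal using 2
  · rfl
  rw [Real.rpow_def_of_pos hApos]
  congr 1
  have hpne : p ≠ 0 := hp0.ne'
  rw [hαdef]
  field_simp
  ring
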